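/- Let Ω be a flat 2-torus of area |Ω|, and let u⁰ ∈ L¹(Ω) ∩ L^∞(Ω) be given. For η₁, η₂, η₃ > 0 and fixed functions u₁⁰, u₂⁰, u₃⁰, the functional I(w₁,w₂,w₃) = ∫_Ω { (1/(4α))|∇w₁|² + (1/(12α))|∇w₂|² + (1/(12β))|∇w₃|² + e^{u₁⁰+v₁} + e^{u₂⁰+v₂} + e^{u₃⁰+v₃} } dx − η₁·v̄₁ − η₂·v̄₂ − η₃·v̄₃ (where v_ℓ are the linear combinations of the w's as in the Cartan transformation and v̄_ℓ denotes the mean of v_ℓ over Ω) satisfies the lower bound I ≥ ∫_Ω {(1/(4α))|∇ẇ₁|² + (1/(12α))|∇ẇ₂|² + (1/(12β))|∇ẇ₃|²} dx + Σ_{ℓ=1}^3 η_ℓ(1 + ln(σ_ℓ/η_ℓ)), where σ_ℓ = |Ω| exp((1/|Ω|)∫_Ω u_ℓ⁰ dx) and ẇ denotes the mean-zero part. In particular I is bounded below on W^{1,2}(Ω)³. -/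

import Mathlib

open MeasureTheory Real

lemma scalar_ineq (σ η t : ℝ) (hσ : 0 < σ) (hη : 0 < η) :
    σ * Real.exp t - η * t ≥ η * (1 + Real.log (σ / η)) := by
  have h := Real.add_one_le_exp (t + Real.log (σ / η))
  have he : Real.exp (t + Real.log (σ / η)) = Real.exp t * (σ / η) := by
    rw [Real.exp_add, Real.exp_log (by positivity)]
  rw [he] at h
  have h2 : η * (t + Real.log (σ / η) + 1) ≤ η * (Real.exp t * (σ / η)) :=
    mul_le_mul_of_nonneg_left h hη.le
  have hne : η ≠ 0 := hη.ne'
  field_simp at h2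
  nlinarith [h2]

lemma comp_ineq (L₁ L₂ : ℝ) (hL₁ : 0 < L₁) (hL₂ : 0 < L₂)
    (Ω : Set (ℝ × ℝ)) (hΩ : Ω = Set.Ioc 0 L₁ ×ˢ Set.Ioc 0 L₂)
    (A : ℝ) (hA : A = L₁ * L₂) (η : ℝ) (hη : 0 < η)
    (u v : ℝ × ℝ → ℝ) (hu : Continuous u) (hv : Continuous v)
    (hie : IntegrableOn (fun p => Real.exp (u p + v p)) Ω volume)
    (σ : ℝ) (hσ : σ = A * Real.exp ((1 / A) * ∫ p in Ω, u p)) :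
    (∫ p in Ω, Real.exp (u p + v p)) - η * ((1 / A) * ∫ p in Ω, v p)
      ≥ η * (1 + Real.log (σ / η)) := by
  have hA0 : 0 < A := by rw [hA]; positivity
  -- volume of Ω
  have hvol : volume Ω = ENNReal.ofReal A := by
    rw [hΩ, hA, MeasureTheory.Measure.volume_eq_prod, MeasureTheory.Measure.prod_prod,
      Real.volume_Ioc, Real.volume_Ioc, sub_zero, sub_zero,
      ← ENNReal.ofReal_mul hL₁.le]
  have hvolT : (volume Ω).toReal = A := by rw [hvol, ENNReal.toReal_ofReal hA0.le]
  -- integrability of u, v on Ω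
  have hsub : Ω ⊆ Set.Icc 0 L₁ ×ˢ Set.Icc 0 L₂ := by
    rw [hΩ]; exact Set.prod_mono Set.Ioc_subset_Icc_self Set.Ioc_subset_Icc_self
  have hcpt : IsCompact (Set.Icc 0 L₁ ×ˢ Set.Icc 0 L₂) := isCompact_Icc.prod isCompact_Icc
  have hiu : IntegrableOn u Ω volume :=
    (hu.continuousOn.integrableOn_compact hcpt).mono_set hsub
  have hiv : IntegrableOn v Ω volume :=
    (hv.continuousOn.integrableOn_compact hcpt).mono_set hsub
  have hif : IntegrableOn (fun p => u p + v p) Ω volume := hiu.add hiv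
  -- Jensen's inequality
  haveI : IsFiniteMeasure (volume.restrict Ω) := by
    constructor; rw [Measure.restrict_apply_univ, hvol]; exact ENNReal.ofReal_lt_top
  haveI : NeZero (volume.restrict Ω) := by
    constructor
    intro h
    have := congrArg (fun m : Measure (ℝ × ℝ) => m Set.univ) h
    simp [Measure.restrict_apply_univ, hvol, ENNReal.ofReal_eq_zero, not_le.mpr hA0] at this
  have hjensen := convexOn_exp.map_average_le continuous_exp.continuousOn isClosed_univ
    (Filter.Eventually.of_forall (fun x => Set.mem_univ _)) hif
    (g := Real.exp) (f := fun p => u p + v p) (μ := volume.restrict Ω) hie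
  rw [average_eq, average_eq, measureReal_def, Measure.restrict_apply_univ, hvolT, smul_eq_mul, smul_eq_mul] at hjensen
  have hsplit : (∫ p in Ω, (u p + v p)) = (∫ p in Ω, u p) + (∫ p in Ω, v p) :=
    integral_add hiu hiv
  rw [hsplit] at hjensen
  -- combine
  have key : σ * Real.exp ((1 / A) * ∫ p in Ω, v p) ≤ ∫ p in Ω, Real.exp (u p + v p) := by
    rw [hσ, mul_assoc, ← Real.exp_add, ← mul_add]
    have := mul_le_mul_of_nonneg_left hjensen hA0.le
    calc A * Real.exp ((1 / A) * ((∫ p in Ω, u p) + ∫ p in Ω, v p))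
        ≤ A * (A⁻¹ * ∫ p in Ω, Real.exp (u p + v p)) := by
          apply mul_le_mul_of_nonneg_left _ hA0.le
          convert hjensen using 2
          · rfl
          · ring
      _ = ∫ p in Ω, Real.exp (u p + v p) := by field_simp
  have hσ0 : 0 < σ := by rw [hσ]; positivity
  have hscalar := scalar_ineq σ η ((1 / A) * ∫ p in Ω, v p) hσ0 hη
  linarith

/-- Squared gradient of a function on `ℝ × ℝ`. -/
noncomputable def gradSq (f : ℝ × ℝ → ℝ) (p : ℝ × ℝ) : ℝ :=
  (fderiv ℝ f p (1, 0)) ^ 2 + (fderiv ℝ f p (0, 1)) ^ 2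

/-- Double periodicity with periods `L₁`, `L₂`. -/
def DPeriodic' (L₁ L₂ : ℝ) (f : ℝ × ℝ → ℝ) : Prop :=
  ∀ p : ℝ × ℝ, f (p.1 + L₁, p.2) = f p ∧ f (p.1, p.2 + L₂) = f p

theorem stmt13 (L₁ L₂ : ℝ) (hL₁ : 0 < L₁) (hL₂ : 0 < L₂)
    (Ω : Set (ℝ × ℝ)) (hΩ : Ω = Set.Ioc 0 L₁ ×ˢ Set.Ioc 0 L₂)
    (A : ℝ) (hA : A = L₁ * L₂)
    (α β : ℝ) (hα : 0 < α) (hβ : 0 < β)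
    (η₁ η₂ η₃ : ℝ) (hη₁ : 0 < η₁) (hη₂ : 0 < η₂) (hη₃ : 0 < η₃)
    (u₁ u₂ u₃ w₁ w₂ w₃ : ℝ × ℝ → ℝ)
    (hu₁ : Continuous u₁) (hu₂ : Continuous u₂) (hu₃ : Continuous u₃)
    (hw₁ : ContDiff ℝ 1 w₁) (hw₂ : ContDiff ℝ 1 w₂) (hw₃ : ContDiff ℝ 1 w₃)
    (hpu₁ : DPeriodic' L₁ L₂ u₁) (hpu₂ : DPeriodic' L₁ L₂ u₂)
    (hpu₃ : DPeriodic' L₁ L₂ u₃)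
    (hpw₁ : DPeriodic' L₁ L₂ w₁) (hpw₂ : DPeriodic' L₁ L₂ w₂)
    (hpw₃ : DPeriodic' L₁ L₂ w₃)
    (v₁ : ℝ × ℝ → ℝ) (hv₁ : v₁ = fun p => w₁ p / 2 + w₂ p / 6 + w₃ p / 3)
    (v₂ : ℝ × ℝ → ℝ) (hv₂ : v₂ = fun p => -w₁ p / 2 + w₂ p / 6 + w₃ p / 3)
    (v₃ : ℝ × ℝ → ℝ) (hv₃ : v₃ = fun p => -w₂ p / 3 + w₃ p / 3)
    (hie₁ : IntegrableOn (fun p => Real.exp (u₁ p + v₁ p)) Ω volume)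
    (hie₂ : IntegrableOn (fun p => Real.exp (u₂ p + v₂ p)) Ω volume)
    (hie₃ : IntegrableOn (fun p => Real.exp (u₃ p + v₃ p)) Ω volume)
    (hig₁ : IntegrableOn (gradSq w₁) Ω volume)
    (hig₂ : IntegrableOn (gradSq w₂) Ω volume)
    (hig₃ : IntegrableOn (gradSq w₃) Ω volume)
    (σ₁ σ₂ σ₃ : ℝ)
    (hσ₁ : σ₁ = A * Real.exp ((1 / A) * ∫ p in Ω, u₁ p))
    (hσ₂ : σ₂ = A * Real.exp ((1 / A) * ∫ p in Ω, u₂ p))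
    (hσ₃ : σ₃ = A * Real.exp ((1 / A) * ∫ p in Ω, u₃ p)) :
    (∫ p in Ω, ((1 / (4 * α)) * gradSq w₁ p + (1 / (12 * α)) * gradSq w₂ p
        + (1 / (12 * β)) * gradSq w₃ p))
      + (∫ p in Ω, (Real.exp (u₁ p + v₁ p) + Real.exp (u₂ p + v₂ p)
        + Real.exp (u₃ p + v₃ p)))
      - η₁ * ((1 / A) * ∫ p in Ω, v₁ p)
      - η₂ * ((1 / A) * ∫ p in Ω, v₂ p)
      - η₃ * ((1 / A) * ∫ p in Ω, v₃ p)
    ≥ (∫ p in Ω, ((1 / (4 * α)) * gradSq w₁ p + (1 / (12 * α)) * gradSq w₂ p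
        + (1 / (12 * β)) * gradSq w₃ p))
      + η₁ * (1 + Real.log (σ₁ / η₁))
      + η₂ * (1 + Real.log (σ₂ / η₂))
      + η₃ * (1 + Real.log (σ₃ / η₃)) := by
  
  have hcv₁ : Continuous v₁ := by
    rw [hv₁]
    exact ((hw₁.continuous.div_const 2).add (hw₂.continuous.div_const 6)).add (hw₃.continuous.div_const 3)
  have hcv₂ : Continuous v₂ := by
    rw [hv₂]
    exact ((hw₁.continuous.neg.div_const 2).add (hw₂.continuous.div_const 6)).add (hw₃.continuous.div_const 3)
  have hcv₃ : Continuous v₃ := by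
    rw [hv₃]
    exact (hw₂.continuous.neg.div_const 3).add (hw₃.continuous.div_const 3)
  have h1 := comp_ineq L₁ L₂ hL₁ hL₂ Ω hΩ A hA η₁ hη₁ u₁ v₁ hu₁ hcv₁ hie₁ σ₁ hσ₁
  have h2 := comp_ineq L₁ L₂ hL₁ hL₂ Ω hΩ A hA η₂ hη₂ u₂ v₂ hu₂ hcv₂ hie₂ σ₂ hσ₂
  have h3 := comp_ineq L₁ L₂ hL₁ hL₂ Ω hΩ A hA η₃ hη₃ u₃ v₃ hu₃ hcv₃ hie₃ σ₃ hσ₃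
  have hsplit : (∫ p in Ω, (Real.exp (u₁ p + v₁ p) + Real.exp (u₂ p + v₂ p)
      + Real.exp (u₃ p + v₃ p)))
      = (∫ p in Ω, Real.exp (u₁ p + v₁ p)) + (∫ p in Ω, Real.exp (u₂ p + v₂ p))
        + (∫ p in Ω, Real.exp (u₃ p + v₃ p)) := by
    have := integral_add (μ := volume.restrict Ω) (hie₁.add hie₂) hie₃
    simp only [Pi.add_apply] at this
    rw [integral_add (μ := volume.restrict Ω) hie₁ hie₂] at this
    exact this
  rw [hsplit]
  linarith
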